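/- Let ω = exp(πi/g) be a primitive 2g-th root of unity. Then max over subsets J ⊆ [2g] of |Σ_{j∈J} ω^j| is attained by a subset J_0 of cardinality g consisting of g consecutive powers, and the maximum value equals 2/|1-ω| = 1/sin(π/(2g)). -/

import Mathlib

open Finset Complex

noncomputable section

lemma integral_abs_cos (a : ℝ) : ∫ x in a..(a + Real.pi), |Real.cos x| = 2 := by
  have hper : Function.Periodic (fun x => |Real.cos x|) Real.pi := by
    intro x; simp [Real.cos_add]
  have := hper.intervalIntegral_add_eq a 0
  rw [this, zero_add]
  have h1 : ∫ x in (0:ℝ)..(Real.pi/2), |Real.cos x| = 1 := by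
    have heq : Set.EqOn (fun x => |Real.cos x|) Real.cos (Set.uIcc 0 (Real.pi/2)) := by
      intro x hx
      rw [Set.uIcc_of_le (by positivity)] at hx
      exact abs_of_nonneg (Real.cos_nonneg_of_mem_Icc ⟨by linarith [hx.1, Real.pi_pos], hx.2⟩)
    rw [intervalIntegral.integral_congr heq]
    simp
  have h2 : ∫ x in (Real.pi/2)..Real.pi, |Real.cos x| = 1 := by
    have heq : Set.EqOn (fun x => |Real.cos x|) (fun x => -Real.cos x)
        (Set.uIcc (Real.pi/2) Real.pi) := by
      intro x hx
      rw [Set.uIcc_of_le (by linarith [Real.pi_pos])] at hx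
      have := Real.cos_nonpos_of_pi_div_two_le_of_le hx.1 (by linarith [hx.2, Real.pi_pos])
      simp [abs_of_nonpos this]
    rw [intervalIntegral.integral_congr heq]
    simp [integral_cos]
  have hint : ∀ u v : ℝ, IntervalIntegrable (fun x => |Real.cos x|) MeasureTheory.volume u v :=
    fun u v => (Real.continuous_cos.abs).intervalIntegrable u v
  rw [← intervalIntegral.integral_add_adjacent_intervals (hint 0 (Real.pi/2))
    (hint (Real.pi/2) Real.pi), h1, h2]
  norm_num

lemma integral_abs_cos2 (a : ℝ) : ∫ x in a..(a + (2*Real.pi)), |Real.cos x| = 4 := by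
  have hint : ∀ u v : ℝ, IntervalIntegrable (fun x => |Real.cos x|) MeasureTheory.volume u v :=
    fun u v => (Real.continuous_cos.abs).intervalIntegrable u v
  have h : a + 2*Real.pi = (a + Real.pi) + Real.pi := by ring
  rw [h, ← intervalIntegral.integral_add_adjacent_intervals (hint a (a+Real.pi))
    (hint (a+Real.pi) (a+Real.pi+Real.pi)), integral_abs_cos, integral_abs_cos]
  norm_num

lemma sin_pos_aux (g : ℕ) (hg : 1 ≤ g) : 0 < Real.sin (Real.pi / (2*(g:ℝ))) := by
  have hgR : (1:ℝ) ≤ g := by exact_mod_cast hg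
  apply Real.sin_pos_of_pos_of_lt_pi
  · positivity
  · calc Real.pi / (2*(g:ℝ)) ≤ Real.pi / 2 := by
          apply div_le_div_of_nonneg_left Real.pi_pos.le two_pos (by nlinarith)
        _ < Real.pi := by linarith [Real.pi_pos]

/-- key: sum of |cos| at 2g equally spaced points -/
lemma sum_abs_cos_le (g : ℕ) (hg : 1 ≤ g) (φ : ℝ) :
    ∑ j ∈ Finset.Icc 1 (2*g), |Real.cos (Real.pi * j / g - φ)|
      ≤ 2 / Real.sin (Real.pi / (2*(g:ℝ))) := by
  have hgR : (0:ℝ) < g := by exact_mod_cast hg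
  have hs : 0 < Real.sin (Real.pi / (2*(g:ℝ))) := sin_pos_aux g hg
  set s := Real.sin (Real.pi / (2*(g:ℝ))) with hsdef
  obtain ⟨x, hx⟩ : ∃ x : ℕ → ℝ, x = fun j : ℕ => Real.pi * j / g - φ - Real.pi / (2*(g:ℝ)) :=
    ⟨_, rfl⟩
  have hgen : ∀ c h' : ℝ, Real.sin (c + h') - Real.sin (c - h') = Real.cos c * (2 * h'.sin) := by
    intro c h'; rw [Real.sin_add, Real.sin_sub]; ring
  have key : ∀ j : ℕ, |Real.cos (Real.pi * j / g - φ)| * (2*s)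
      = |Real.sin (x (j+1)) - Real.sin (x j)| := by
    intro j
    have h1 : x (j+1) = (Real.pi * j / g - φ) + Real.pi/(2*(g:ℝ)) := by
      rw [hx]; push_cast; field_simp; ring
    have h2 : x j = (Real.pi * j / g - φ) - Real.pi/(2*(g:ℝ)) := by rw [hx]
    rw [h1, h2, hgen, abs_mul, abs_of_pos (by positivity : (0:ℝ) < 2*s)]
  have hmono : ∀ j : ℕ, x j ≤ x (j+1) := by
    intro j
    have h1 : x (j+1) - x j = Real.pi / g := by
      rw [hx]; push_cast; field_simp; ring
    have h2 : (0:ℝ) < Real.pi / g := div_pos Real.pi_pos hgR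
    linarith
  have step : ∀ j : ℕ, |Real.sin (x (j+1)) - Real.sin (x j)|
      ≤ ∫ t in (x j)..(x (j+1)), |Real.cos t| := by
    intro j
    rw [← integral_cos]
    exact intervalIntegral.abs_integral_le_integral_abs (hmono j)
  have hint : ∀ u v : ℝ, IntervalIntegrable (fun t => |Real.cos t|) MeasureTheory.volume u v :=
    fun u v => (Real.continuous_cos.abs).intervalIntegrable u v
  have sumint : ∑ j ∈ Finset.Icc 1 (2*g), ∫ t in (x j)..(x (j+1)), |Real.cos t|
      = ∫ t in (x 1)..(x (2*g+1)), |Real.cos t| := by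
    rw [← Finset.Ico_add_one_right_eq_Icc]
    exact intervalIntegral.sum_integral_adjacent_intervals_Ico (by omega)
      (fun k _ => hint _ _)
  have hend : x (2*g+1) = x 1 + 2*Real.pi := by
    rw [hx]; push_cast; field_simp; ring
  have total : (∑ j ∈ Finset.Icc 1 (2*g), |Real.cos (Real.pi * j / g - φ)|) * (2*s) ≤ 4 := by
    rw [Finset.sum_mul]
    calc ∑ j ∈ Finset.Icc 1 (2*g), |Real.cos (Real.pi * j / g - φ)| * (2*s)
        = ∑ j ∈ Finset.Icc 1 (2*g), |Real.sin (x (j+1)) - Real.sin (x j)| :=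
          Finset.sum_congr rfl (fun j _ => key j)
      _ ≤ ∑ j ∈ Finset.Icc 1 (2*g), ∫ t in (x j)..(x (j+1)), |Real.cos t| :=
          Finset.sum_le_sum (fun j _ => step j)
      _ = ∫ t in (x 1)..(x (2*g+1)), |Real.cos t| := sumint
      _ = 4 := by rw [hend]; exact integral_abs_cos2 _
  have h4 : ∑ j ∈ Finset.Icc 1 (2*g), |Real.cos (Real.pi * j / g - φ)| ≤ 4 / (2*s) :=
    (le_div_iff₀ (by positivity)).mpr total
  calc ∑ j ∈ Finset.Icc 1 (2*g), |Real.cos (Real.pi * j / g - φ)| ≤ 4 / (2*s) := h4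
    _ = 2 / s := by rw [div_eq_div_iff (by positivity) (by positivity)]; ring

lemma omega_pow (g : ℕ) (hg : 1 ≤ g) (j : ℕ) :
    Complex.exp ((Real.pi : ℂ) * Complex.I / (g : ℂ)) ^ j
      = Complex.exp (((Real.pi * j / g : ℝ) : ℂ) * Complex.I) := by
  have hg0 : (g:ℂ) ≠ 0 := Nat.cast_ne_zero.mpr (by omega)
  rw [← Complex.exp_nat_mul]
  congr 1
  push_cast
  field_simp

lemma cos_pi_div_g (g : ℕ) (hg : 1 ≤ g) :
    Real.cos (Real.pi / g) = 1 - 2 * Real.sin (Real.pi / (2*(g:ℝ)))^2 := by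
  have hgR : (0:ℝ) < g := by exact_mod_cast hg
  have h2 : Real.pi / g = 2 * (Real.pi / (2*(g:ℝ))) := by field_simp
  rw [h2, Real.cos_two_mul']
  nlinarith [Real.sin_sq_add_cos_sq (Real.pi / (2*(g:ℝ)))]

lemma omega_ne_one (g : ℕ) (hg : 1 ≤ g) :
    Complex.exp ((Real.pi : ℂ) * Complex.I / (g : ℂ)) ≠ 1 := by
  have hgR : (0:ℝ) < g := by exact_mod_cast hg
  intro h
  have h1 : Complex.exp ((Real.pi : ℂ) * Complex.I / (g : ℂ)) ^ 1 = 1 := by rw [pow_one, h]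
  rw [omega_pow g hg 1] at h1
  rw [Nat.cast_one] at h1
  have h2 : Real.cos (Real.pi * 1 / g) = 1 := by
    rw [← Complex.exp_ofReal_mul_I_re, h1]; simp
  have h3 : Real.pi * 1 / g = Real.pi / g := by ring
  rw [h3, cos_pi_div_g g hg] at h2
  have := sin_pos_aux g hg
  nlinarith

lemma omega_pow_g (g : ℕ) (hg : 1 ≤ g) :
    Complex.exp ((Real.pi : ℂ) * Complex.I / (g : ℂ)) ^ g = -1 := by
  have hgR : (0:ℝ) < g := by exact_mod_cast hg
  rw [omega_pow g hg g, show (Real.pi * g / g : ℝ) = Real.pi by field_simp]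
  exact Complex.exp_pi_mul_I

lemma omega_pow_two_g (g : ℕ) (hg : 1 ≤ g) :
    Complex.exp ((Real.pi : ℂ) * Complex.I / (g : ℂ)) ^ (2*g) = 1 := by
  rw [pow_mul', omega_pow_g g hg]; norm_num

lemma abs_one_sub_omega (g : ℕ) (hg : 1 ≤ g) :
    ‖1 - Complex.exp ((Real.pi : ℂ) * Complex.I / (g : ℂ))‖
      = 2 * Real.sin (Real.pi / (2*(g:ℝ))) := by
  have hgR : (0:ℝ) < g := by exact_mod_cast hg
  have hs := sin_pos_aux g hg
  have hω : Complex.exp ((Real.pi : ℂ) * Complex.I / (g : ℂ))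
      = Complex.exp (((Real.pi / g : ℝ) : ℂ) * Complex.I) := by
    have := omega_pow g hg 1
    rw [pow_one, Nat.cast_one] at this
    rw [this, show (Real.pi * 1 / g : ℝ) = Real.pi / g by ring]
  rw [hω, Complex.norm_def, Complex.normSq_apply]
  simp only [Complex.sub_re, Complex.sub_im, Complex.one_re, Complex.one_im,
    Complex.exp_ofReal_mul_I_re, Complex.exp_ofReal_mul_I_im]
  have hcos := cos_pi_div_g g hg
  have hkey : (1 - Real.cos (Real.pi / g)) * (1 - Real.cos (Real.pi / g))
      + (0 - Real.sin (Real.pi / g)) * (0 - Real.sin (Real.pi / g))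
      = (2 * Real.sin (Real.pi / (2*(g:ℝ))))^2 := by
    nlinarith [Real.sin_sq_add_cos_sq (Real.pi / g)]
  rw [hkey, Real.sqrt_sq (by positivity)]

lemma sum_shift (n : ℕ) (f : ℕ → ℂ) :
    ∑ j ∈ Finset.Icc 1 n, f j = ∑ t ∈ Finset.range n, f (1+t) := by
  rw [← Finset.Ico_add_one_right_eq_Icc, Finset.sum_Ico_eq_sum_range]
  simp

lemma sum_all_zero (g : ℕ) (hg : 1 ≤ g) :
    ∑ j ∈ Finset.Icc 1 (2*g), Complex.exp ((Real.pi : ℂ) * Complex.I / (g : ℂ)) ^ j = 0 := by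
  rw [sum_shift]
  simp only [pow_add, pow_one]
  rw [← Finset.mul_sum, geom_sum_eq (omega_ne_one g hg), omega_pow_two_g g hg]
  simp

lemma max_half (c : ℝ) : max c 0 = (c + |c|)/2 := by
  rcases le_total 0 c with h|h
  · rw [max_eq_left h, _root_.abs_of_nonneg h]; ring
  · rw [max_eq_right h, _root_.abs_of_nonpos h]; ring

lemma term_re (g : ℕ) (hg : 1 ≤ g) (φ : ℝ) (j : ℕ) :
    (Complex.exp ((Real.pi : ℂ) * Complex.I / (g : ℂ)) ^ j
      * Complex.exp (-(φ:ℂ) * Complex.I)).re = Real.cos (Real.pi * j / g - φ) := by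
  rw [omega_pow g hg j, show (-(φ:ℂ) * Complex.I) = ((-φ : ℝ):ℂ) * Complex.I by push_cast; ring,
    ← Complex.exp_add,
    show ((Real.pi * j / g : ℝ):ℂ) * Complex.I + ((-φ : ℝ):ℂ) * Complex.I
      = ((Real.pi * j / g - φ : ℝ):ℂ) * Complex.I by push_cast; ring]
  exact Complex.exp_ofReal_mul_I_re _

lemma upper_bound (g : ℕ) (hg : 1 ≤ g) (J : Finset ℕ) (hJ : J ⊆ Finset.Icc 1 (2*g)) :
    ‖∑ j ∈ J, Complex.exp ((Real.pi : ℂ) * Complex.I / (g : ℂ)) ^ j‖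
      ≤ 1 / Real.sin (Real.pi / (2 * (g:ℝ))) := by
  have hgR : (0:ℝ) < g := by exact_mod_cast hg
  have hs := sin_pos_aux g hg
  set ω := Complex.exp ((Real.pi : ℂ) * Complex.I / (g : ℂ)) with hω
  set S := ∑ j ∈ J, ω ^ j with hS
  set φ := Complex.arg S with hφ
  have habs : ((‖S‖ : ℝ):ℂ) = S * Complex.exp (-(φ:ℂ) * Complex.I) := by
    conv_rhs => rw [← Complex.norm_mul_exp_arg_mul_I S]
    rw [mul_assoc, ← Complex.exp_add,
      show ((Complex.arg S : ℂ) * Complex.I + -(φ:ℂ) * Complex.I) = 0 by rw [hφ]; ring,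
      Complex.exp_zero, mul_one]
  have hre : ‖S‖ = ∑ j ∈ J, Real.cos (Real.pi * j / g - φ) := by
    have h1 : (((‖S‖ : ℝ)):ℂ).re = ‖S‖ := by simp
    rw [← h1, habs, Finset.sum_mul, Complex.re_sum]
    exact Finset.sum_congr rfl (fun j _ => term_re g hg φ j)
  have hzero : ∑ j ∈ Finset.Icc 1 (2*g), Real.cos (Real.pi * j / g - φ) = 0 := by
    have h3 : ∑ j ∈ Finset.Icc 1 (2*g), Real.cos (Real.pi * j / g - φ)
        = ((∑ j ∈ Finset.Icc 1 (2*g), ω ^ j) * Complex.exp (-(φ:ℂ) * Complex.I)).re := by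
      rw [Finset.sum_mul, Complex.re_sum]
      exact Finset.sum_congr rfl (fun j _ => (term_re g hg φ j).symm)
    rw [h3, hω, sum_all_zero g hg, zero_mul, Complex.zero_re]
  rw [hre]
  calc ∑ j ∈ J, Real.cos (Real.pi * j / g - φ)
      ≤ ∑ j ∈ J, max (Real.cos (Real.pi * j / g - φ)) 0 :=
        Finset.sum_le_sum (fun j _ => le_max_left _ _)
    _ ≤ ∑ j ∈ Finset.Icc 1 (2*g), max (Real.cos (Real.pi * j / g - φ)) 0 :=
        Finset.sum_le_sum_of_subset_of_nonneg hJ (fun j _ _ => le_max_right _ _)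
    _ = ((∑ j ∈ Finset.Icc 1 (2*g), Real.cos (Real.pi * j / g - φ))
        + ∑ j ∈ Finset.Icc 1 (2*g), |Real.cos (Real.pi * j / g - φ)|)/2 := by
        rw [Finset.sum_congr rfl (fun j (_ : j ∈ Finset.Icc 1 (2*g)) => max_half
          (Real.cos (Real.pi * j / g - φ))), ← Finset.sum_div, Finset.sum_add_distrib]
    _ ≤ (0 + 2 / Real.sin (Real.pi / (2*(g:ℝ))))/2 := by
        have := sum_abs_cos_le g hg φ
        rw [hzero]
        linarith
    _ = 1 / Real.sin (Real.pi / (2*(g:ℝ))) := by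
        rw [zero_add, div_div]
        rw [div_eq_div_iff (by positivity) (by positivity)]; ring

end

/-- For `ω = exp(πi/g)` a primitive `2g`-th root of unity, the maximum over subsets
`J ⊆ [2g]` of `|∑_{j∈J} ω^j|` is attained by a subset `J₀` of cardinality `g`
consisting of `g` consecutive powers, and the maximum equals
`2/|1-ω| = 1/sin(π/(2g))`. -/
theorem stmt_13 (g : ℕ) (hg : 1 ≤ g) :
    ∃ J₀ ⊆ Finset.Icc 1 (2 * g), J₀.card = g ∧
      (∃ a : ℕ, J₀ = (Finset.range g).image (fun t => a + 1 + t)) ∧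
      ‖∑ j ∈ J₀, Complex.exp ((Real.pi : ℂ) * Complex.I / (g : ℂ)) ^ j‖
          = 1 / Real.sin (Real.pi / (2 * g)) ∧
      (1 : ℝ) / Real.sin (Real.pi / (2 * g))
          = 2 / ‖1 - Complex.exp ((Real.pi : ℂ) * Complex.I / (g : ℂ))‖ ∧
      ∀ J ⊆ Finset.Icc 1 (2 * g),
        ‖∑ j ∈ J, Complex.exp ((Real.pi : ℂ) * Complex.I / (g : ℂ)) ^ j‖
          ≤ 1 / Real.sin (Real.pi / (2 * g)) := by
  have hgR : (0:ℝ) < g := by exact_mod_cast hg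
  have hs := sin_pos_aux g hg
  set ω := Complex.exp ((Real.pi : ℂ) * Complex.I / (g : ℂ)) with hω
  set s := Real.sin (Real.pi / (2 * (g:ℝ))) with hsdef
  have hinj : Function.Injective (fun t : ℕ => 0 + 1 + t) := fun a b h => by
    simpa using h
  refine ⟨(Finset.range g).image (fun t => 0 + 1 + t), ?_, ?_, ⟨0, rfl⟩, ?_, ?_, ?_⟩
  · intro j hj
    simp only [Finset.mem_image, Finset.mem_range] at hj
    obtain ⟨t, ht, rfl⟩ := hj
    simp only [Finset.mem_Icc]
    omega
  · rw [Finset.card_image_of_injective _ hinj, Finset.card_range]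
  · have hne : (1:ℂ) - ω ≠ 0 := by
      intro h
      exact omega_ne_one g hg (by linear_combination -h)
    have hne' : ω - 1 ≠ 0 := by
      intro h
      exact hne (by linear_combination -h)
    have hsum : ∑ j ∈ (Finset.range g).image (fun t => 0 + 1 + t), ω ^ j
        = 2 * ω / (1 - ω) := by
      rw [Finset.sum_image (fun x _ y _ h => hinj h)]
      simp only [zero_add, pow_add, pow_one]
      rw [← Finset.mul_sum, geom_sum_eq (omega_ne_one g hg), omega_pow_g g hg]
      rw [mul_div_assoc', div_eq_div_iff hne' hne]
      ring
    have habsω : ‖ω‖ = 1 := by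
      have h1 := omega_pow g hg 1
      rw [pow_one] at h1
      rw [hω, h1, Complex.norm_exp_ofReal_mul_I]
    rw [hsum, norm_div, norm_mul, habsω, Complex.norm_two, abs_one_sub_omega g hg, ← hsdef]
    rw [div_eq_div_iff (by positivity) (by positivity)]
    ring
  · rw [abs_one_sub_omega g hg, ← hsdef, div_eq_div_iff (by positivity) (by positivity)]
    ring
  · intro J hJ
    exact upper_bound g hg J hJ
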